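/- arXiv:2101.09898 — 8 statements merged into one kernel-verified Lean document; each statement's English description precedes it below -/
import Mathlib

section
/- For every a, b ∈ [0,1] and x ∈ (0,1), the equation (ab−c)(āb̄−c)(2x)² = (ab̄+c)(āb+c)(1−x)² has a unique solution c in the closed interval [−min(ab̄, āb), min(ab, āb̄)], where ā = 1−a and b̄ = 1−b. -/
theorem stmt_1 (a b x : ℝ) (ha : a ∈ Set.Icc (0:ℝ) 1) (hb : b ∈ Set.Icc (0:ℝ) 1)
    (hx : x ∈ Set.Ioo (0:ℝ) 1) :
    ∃! c : ℝ, c ∈ Set.Icc (-(min (a * (1 - b)) ((1 - a) * b))) (min (a * b) ((1 - a) * (1 - b))) ∧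
      (a * b - c) * ((1 - a) * (1 - b) - c) * (2 * x) ^ 2
        = (a * (1 - b) + c) * ((1 - a) * b + c) * (1 - x) ^ 2 := by
  obtain ⟨ha0, ha1⟩ := ha
  obtain ⟨hb0, hb1⟩ := hb
  obtain ⟨hx0, hx1⟩ := hx
  set f : ℝ → ℝ := fun c =>
    (a * b - c) * ((1 - a) * (1 - b) - c) * (2 * x) ^ 2
      - (a * (1 - b) + c) * ((1 - a) * b + c) * (1 - x) ^ 2 with hf
  have hA : 0 ≤ a * b := mul_nonneg ha0 hb0
  have hB : 0 ≤ (1 - a) * (1 - b) := mul_nonneg (by linarith) (by linarith)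
  have hC : 0 ≤ a * (1 - b) := mul_nonneg ha0 (by linarith)
  have hD : 0 ≤ (1 - a) * b := mul_nonneg (by linarith) hb0
  set L : ℝ := -(min (a * (1 - b)) ((1 - a) * b)) with hL
  set R : ℝ := min (a * b) ((1 - a) * (1 - b)) with hR
  have hL0 : L ≤ 0 := by
    simp only [hL, neg_nonpos]
    exact le_min hC hD
  have hR0 : 0 ≤ R := le_min hA hB
  have hLR : L ≤ R := hL0.trans hR0
  have hcont : Continuous f := by fun_prop
  -- strict antitonicity
  have hanti : StrictAntiOn f (Set.Icc L R) := by
    apply strictAntiOn_of_deriv_neg (convex_Icc L R) hcont.continuousOn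
    intro c hc
    rw [interior_Icc] at hc
    have hd : HasDerivAt f
        (-(4 * x ^ 2) * (a * b + (1 - a) * (1 - b) - 2 * c)
          - (1 - x) ^ 2 * (a * (1 - b) + (1 - a) * b + 2 * c)) c := by
      have h1 : HasDerivAt (fun c : ℝ => (a * b - c) * ((1 - a) * (1 - b) - c) * (2 * x) ^ 2)
          (((-1) * ((1 - a) * (1 - b) - c) + (a * b - c) * (-1)) * (2 * x) ^ 2) c :=
        (((hasDerivAt_id c).const_sub (a * b)).mul
          ((hasDerivAt_id c).const_sub ((1 - a) * (1 - b)))).mul_const _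
      have h2 : HasDerivAt (fun c : ℝ => (a * (1 - b) + c) * ((1 - a) * b + c) * (1 - x) ^ 2)
          ((1 * ((1 - a) * b + c) + (a * (1 - b) + c) * 1) * (1 - x) ^ 2) c :=
        (((hasDerivAt_id c).const_add (a * (1 - b))).mul
          ((hasDerivAt_id c).const_add ((1 - a) * b))).mul_const _
      refine (h1.sub h2).congr_deriv ?_
      ring
    rw [hd.deriv]
    have ht1 : 0 ≤ a * b + (1 - a) * (1 - b) - 2 * c := by
      have := hc.2.le
      rw [hR] at this
      have h1 : c ≤ a * b := this.trans (min_le_left _ _)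
      have h2 : c ≤ (1 - a) * (1 - b) := this.trans (min_le_right _ _)
      linarith
    have ht2 : 0 ≤ a * (1 - b) + (1 - a) * b + 2 * c := by
      have := hc.1.le
      rw [hL] at this
      have h1 : -(a * (1 - b)) ≤ c := le_trans (neg_le_neg (min_le_left _ _)) this
      have h2 : -((1 - a) * b) ≤ c := le_trans (neg_le_neg (min_le_right _ _)) this
      linarith
    have hsum : (a * b + (1 - a) * (1 - b) - 2 * c) + (a * (1 - b) + (1 - a) * b + 2 * c) = 1 := by
      ring
    have h4x : 0 < 4 * x ^ 2 := by positivity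
    have h1x : 0 < (1 - x) ^ 2 := pow_pos (by linarith) 2
    nlinarith [mul_nonneg h4x.le ht1, mul_nonneg h1x.le ht2, mul_pos h4x h1x]
  -- sign at endpoints
  have hfL : 0 ≤ f L := by
    have hz : (a * (1 - b) + L) * ((1 - a) * b + L) = 0 := by
      rcases min_cases (a * (1 - b)) ((1 - a) * b) with ⟨h, _⟩ | ⟨h, _⟩ <;>
        rw [hL, h] <;> ring_nf
    simp only [hf]
    rw [hz]
    have : 0 ≤ (a * b - L) * ((1 - a) * (1 - b) - L) * (2 * x) ^ 2 := by
      apply mul_nonneg (mul_nonneg (by linarith) (by linarith)) (by positivity)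
    linarith
  have hfR : f R ≤ 0 := by
    have hz : (a * b - R) * ((1 - a) * (1 - b) - R) = 0 := by
      rcases min_cases (a * b) ((1 - a) * (1 - b)) with ⟨h, _⟩ | ⟨h, _⟩ <;>
        rw [hR, h] <;> ring_nf
    simp only [hf]
    rw [hz]
    have : 0 ≤ (a * (1 - b) + R) * ((1 - a) * b + R) * (1 - x) ^ 2 := by
      apply mul_nonneg (mul_nonneg (by linarith) (by linarith)) (by positivity)
    linarith
  -- existence via IVT
  have hiv := intermediate_value_Icc' hLR hcont.continuousOn
  have h0 : (0 : ℝ) ∈ Set.Icc (f R) (f L) := ⟨hfR, hfL⟩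
  obtain ⟨c, hcmem, hfc⟩ := hiv h0
  refine ⟨c, ⟨hcmem, ?_⟩, ?_⟩
  · have : f c = 0 := hfc
    simp only [hf] at this
    linarith
  · rintro y ⟨hymem, hy⟩
    have hfy : f y = 0 := by simp only [hf]; linarith
    exact hanti.injOn hymem hcmem (by rw [hfy, hfc])
end

section
/- For all a, b ∈ ℝ, the polynomial m(x) := (a + b − x)(2 − a − b − x)(2x)² + (a − b + x)(a − b − x)(1 − x)² has at most one root in the half-open interval (0, 1]. -/
theorem stmt_5 (a b : ℝ) :
    ∀ x ∈ Set.Ioc (0:ℝ) 1, ∀ y ∈ Set.Ioc (0:ℝ) 1,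
      (a + b - x) * (2 - a - b - x) * (2 * x) ^ 2
          + (a - b + x) * (a - b - x) * (1 - x) ^ 2 = 0 →
      (a + b - y) * (2 - a - b - y) * (2 * y) ^ 2
          + (a - b + y) * (a - b - y) * (1 - y) ^ 2 = 0 →
      x = y := by
  rintro x ⟨hx0, hx1⟩ y ⟨hy0, hy1⟩ hmx hmy
  by_contra hne
  have key : (x - y) * (3 * x^2 * y^2 * (x + y - 2) - (a - b)^2 * (x + y - 2*x*y)) = 0 := by
    linear_combination y^2 * hmx - x^2 * hmy
  have hxy2 : x + y < 2 := by
    rcases lt_or_ge x 1 with h | h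
    · linarith
    · have hx : x = 1 := le_antisymm hx1 h
      have : y < 1 := lt_of_le_of_ne hy1 (by intro h'; exact hne (by rw [hx, h']))
      linarith
  have hbr : 3 * x^2 * y^2 * (x + y - 2) - (a - b)^2 * (x + y - 2*x*y) < 0 := by
    nlinarith [mul_pos hx0 hy0, sq_nonneg (a - b), mul_pos (mul_pos hx0 hy0) (mul_pos hx0 hy0),
      mul_nonneg (mul_nonneg (sq_nonneg (a-b)) hx0.le) (sub_nonneg.mpr hy1),
      mul_nonneg (mul_nonneg (sq_nonneg (a-b)) hy0.le) (sub_nonneg.mpr hx1)]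
  rcases mul_eq_zero.mp key with h | h
  · exact hne (by linarith [sub_eq_zero.mp h])
  · linarith
end

section
/- Fix λ ∈ (0, 1/2) and define ρ(r) := √r·(r^λ − 1)/(r − r^λ) for r ∈ (0,1) ∪ (1,∞). Then ρ is strictly increasing on (0,1) and strictly decreasing on (1,∞). -/
open Real Set

private noncomputable def Mfun (l r : ℝ) : ℝ :=
  (1/2 - l) * (1 - r) + (r ^ (1 - l) - r ^ l) / 2

private lemma contOn_rpow (p : ℝ) {s : Set ℝ} (hs : ∀ x ∈ s, x ≠ 0) :
    ContinuousOn (fun x : ℝ => x ^ p) s :=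
  continuousOn_id.rpow_const fun x hx => Or.inl (hs x hx)

private lemma psi_lt {l r : ℝ} (hl0 : 0 < l) (hl2 : l < 1/2) (hr : 1 < r) :
    (1 - l) * r ^ (-l) - l * r ^ (l - 1) < 1 - 2 * l := by
  have hanti : StrictAntiOn (fun x : ℝ => (1 - l) * x ^ (-l) - l * x ^ (l - 1)) (Ici 1) := by
    apply strictAntiOn_of_deriv_neg (convex_Ici 1)
    · have hne : ∀ x ∈ Ici (1:ℝ), x ≠ 0 := fun x hx => by
        have : (1:ℝ) ≤ x := hx; positivity
      exact (continuousOn_const.mul (contOn_rpow _ hne)).sub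
        (continuousOn_const.mul (contOn_rpow _ hne))
    · intro x hx
      rw [interior_Ici] at hx
      have hx0 : (0:ℝ) < x := lt_trans one_pos hx
      have h1 : HasDerivAt (fun r : ℝ => r ^ (-l)) (-l * x ^ (-l - 1)) x :=
        Real.hasDerivAt_rpow_const (Or.inl hx0.ne')
      have h2 : HasDerivAt (fun r : ℝ => r ^ (l - 1)) ((l - 1) * x ^ (l - 1 - 1)) x :=
        Real.hasDerivAt_rpow_const (Or.inl hx0.ne')
      have hD : HasDerivAt (fun x : ℝ => (1 - l) * x ^ (-l) - l * x ^ (l - 1))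
          ((1 - l) * (-l * x ^ (-l - 1)) - l * ((l - 1) * x ^ (l - 1 - 1))) x :=
        (h1.const_mul (1 - l)).sub (h2.const_mul l)
      rw [hD.deriv]
      have key : x ^ (l - 1 - 1) < x ^ (-l - 1) :=
        Real.rpow_lt_rpow_of_exponent_lt hx (by linarith)
      nlinarith [mul_pos (mul_pos hl0 (by linarith : (0:ℝ) < 1 - l))
        (sub_pos.mpr key)]
  have := hanti (self_mem_Ici) (le_of_lt hr : (1:ℝ) ≤ r) hr
  simp only [Real.one_rpow] at this
  linarith

private lemma M_neg {l r : ℝ} (hl0 : 0 < l) (hl2 : l < 1/2) (hr : 1 < r) :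
    Mfun l r < 0 := by
  have hanti : StrictAntiOn (Mfun l) (Ici 1) := by
    apply strictAntiOn_of_deriv_neg (convex_Ici 1)
    · have hne : ∀ x ∈ Ici (1:ℝ), x ≠ 0 := fun x hx => by
        have : (1:ℝ) ≤ x := hx; positivity
      exact (continuousOn_const.mul (continuousOn_const.sub continuousOn_id)).add
        (((contOn_rpow _ hne).sub (contOn_rpow _ hne)).div_const 2)
    · intro x hx
      rw [interior_Ici] at hx
      have hx0 : (0:ℝ) < x := lt_trans one_pos hx
      have h1 : HasDerivAt (fun r : ℝ => r ^ (1 - l)) ((1 - l) * x ^ (1 - l - 1)) x :=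
        Real.hasDerivAt_rpow_const (Or.inl hx0.ne')
      have h2 : HasDerivAt (fun r : ℝ => r ^ l) (l * x ^ (l - 1)) x :=
        Real.hasDerivAt_rpow_const (Or.inl hx0.ne')
      have hD : HasDerivAt (Mfun l)
          ((1/2 - l) * (0 - 1) + ((1 - l) * x ^ (1 - l - 1) - l * x ^ (l - 1)) / 2) x := by
        unfold Mfun
        exact (((hasDerivAt_const x (1:ℝ)).sub (hasDerivAt_id x)).const_mul (1/2 - l)).add
          ((h1.sub h2).div_const 2)
      rw [hD.deriv]
      have hpsi := psi_lt hl0 hl2 hx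
      have hexp : (1 - l - 1 : ℝ) = -l := by ring
      rw [hexp] at *
      linarith
  have := hanti (self_mem_Ici) (le_of_lt hr : (1:ℝ) ≤ r) hr
  have hM1 : Mfun l 1 = 0 := by simp [Mfun]
  linarith

private lemma M_pos {l r : ℝ} (hl0 : 0 < l) (hl2 : l < 1/2) (hr0 : 0 < r) (hr1 : r < 1) :
    0 < Mfun l r := by
  have hinv : 1 < 1 / r := by rw [lt_div_iff₀ hr0]; linarith
  have hneg := M_neg hl0 hl2 hinv
  have hid : Mfun l r = -r * Mfun l (1/r) := by
    unfold Mfun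
    have h1 : (1/r) ^ (1 - l) = r ^ (l - 1) := by
      rw [one_div, Real.inv_rpow hr0.le, ← Real.rpow_neg hr0.le]
      congr 1; ring
    have h2 : (1/r) ^ l = r ^ (-l) := by
      rw [one_div, Real.inv_rpow hr0.le, ← Real.rpow_neg hr0.le]
    rw [h1, h2]
    have h3 : r * r ^ (l - 1) = r ^ l := by
      nth_rewrite 1 [← Real.rpow_one r]
      rw [← Real.rpow_add hr0]; norm_num
    have h4 : r * r ^ (-l) = r ^ (1 - l) := by
      nth_rewrite 1 [← Real.rpow_one r]
      rw [← Real.rpow_add hr0, sub_eq_add_neg]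
    field_simp
    linear_combination h3 - h4
  rw [hid]
  have hpos : 0 < -Mfun l (1/r) := by linarith
  nlinarith [mul_pos hr0 hpos]

private lemma numer_eq {l x : ℝ} (hx : 0 < x) :
    ((l + 1/2) * x ^ (l + 1/2 - 1) - 1/2 * x ^ ((1:ℝ)/2 - 1)) * (x - x ^ l) -
      (x ^ (l + 1/2) - x ^ ((1:ℝ)/2)) * (1 - l * x ^ (l - 1))
    = x ^ (l - 1/2) * Mfun l x := by
  have e1 : x ^ (l + 1/2 - 1) = x ^ l / x ^ ((1:ℝ)/2) := by
    rw [show (l + 1/2 - 1 : ℝ) = l - 1/2 by ring]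
    exact Real.rpow_sub hx l (1/2)
  have e2 : x ^ ((1:ℝ)/2 - 1) = x ^ ((1:ℝ)/2) / x := by
    rw [Real.rpow_sub hx, Real.rpow_one]
  have e3 : x ^ (l + 1/2) = x ^ l * x ^ ((1:ℝ)/2) := Real.rpow_add hx l (1/2)
  have e4 : x ^ (l - 1) = x ^ l / x := by rw [Real.rpow_sub hx, Real.rpow_one]
  have e5 : x ^ (1 - l) = x / x ^ l := by rw [Real.rpow_sub hx, Real.rpow_one]
  have e6 : x ^ (l - 1/2) = x ^ l / x ^ ((1:ℝ)/2) := Real.rpow_sub hx l (1/2)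
  unfold Mfun
  rw [e1, e2, e3, e4, e5, e6]
  have hA : (0:ℝ) < x ^ l := Real.rpow_pos_of_pos hx l
  have hB : (0:ℝ) < x ^ ((1:ℝ)/2) := Real.rpow_pos_of_pos hx _
  have hBB : x ^ ((1:ℝ)/2) * x ^ ((1:ℝ)/2) = x := by
    rw [← Real.rpow_add hx]; norm_num
  set A := x ^ l with hAdef
  set B := x ^ ((1:ℝ)/2) with hBdef
  rw [← hBB]
  field_simp
  ring

theorem stmt_7 (l : ℝ) (hl : l ∈ Set.Ioo (0:ℝ) (1/2)) :
    StrictMonoOn (fun r : ℝ => Real.sqrt r * (r ^ l - 1) / (r - r ^ l)) (Set.Ioo 0 1) ∧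
    StrictAntiOn (fun r : ℝ => Real.sqrt r * (r ^ l - 1) / (r - r ^ l)) (Set.Ioi 1) := by
  obtain ⟨hl0, hl2⟩ := hl
  set h : ℝ → ℝ := fun r => (r ^ (l + 1/2) - r ^ ((1:ℝ)/2)) / (r - r ^ l) with hh
  have hEq : ∀ r : ℝ, 0 < r →
      Real.sqrt r * (r ^ l - 1) / (r - r ^ l) = h r := by
    intro r hr
    rw [hh]
    congr 1
    rw [Real.sqrt_eq_rpow, mul_sub, mul_one, ← Real.rpow_add hr, add_comm]
  have hderiv : ∀ x : ℝ, 0 < x → x - x ^ l ≠ 0 →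
      deriv h x = x ^ (l - 1/2) * Mfun l x / (x - x ^ l) ^ 2 := by
    intro x hx0 hgne
    have hf : HasDerivAt (fun r : ℝ => r ^ (l + 1/2) - r ^ ((1:ℝ)/2))
        ((l + 1/2) * x ^ (l + 1/2 - 1) - 1/2 * x ^ ((1:ℝ)/2 - 1)) x := by
      have a1 : HasDerivAt (fun r : ℝ => r ^ (l + 1/2))
          ((l + 1/2) * x ^ (l + 1/2 - 1)) x :=
        Real.hasDerivAt_rpow_const (Or.inl hx0.ne')
      have a2 : HasDerivAt (fun r : ℝ => r ^ ((1:ℝ)/2))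
          ((1:ℝ)/2 * x ^ ((1:ℝ)/2 - 1)) x :=
        Real.hasDerivAt_rpow_const (Or.inl hx0.ne')
      exact a1.sub a2
    have hg : HasDerivAt (fun r : ℝ => r - r ^ l) (1 - l * x ^ (l - 1)) x :=
      (hasDerivAt_id x).sub (Real.hasDerivAt_rpow_const (Or.inl hx0.ne'))
    have hq := hf.div hg hgne
    rw [hh, (show HasDerivAt (fun r : ℝ => (r ^ (l + 1/2) - r ^ ((1:ℝ)/2)) / (r - r ^ l)) _ x from hq).deriv, numer_eq hx0]
  constructor
  · have hmono : StrictMonoOn h (Ioo 0 1) := by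
      apply strictMonoOn_of_deriv_pos (convex_Ioo 0 1)
      · have hne : ∀ x ∈ Ioo (0:ℝ) 1, x ≠ 0 := fun x hx => hx.1.ne'
        apply ContinuousOn.div ((contOn_rpow _ hne).sub (contOn_rpow _ hne))
          (continuousOn_id.sub (contOn_rpow _ hne))
        intro x hx
        have hlt : x < x ^ l := by
          have := Real.rpow_lt_rpow_of_exponent_gt hx.1 hx.2 (by linarith : l < 1)
          rwa [Real.rpow_one] at this
        show x - x ^ l ≠ 0; intro hc
        linarith
      · intro x hx
        rw [interior_Ioo] at hx
        have hlt : x < x ^ l := by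
          have := Real.rpow_lt_rpow_of_exponent_gt hx.1 hx.2 (by linarith : l < 1)
          rwa [Real.rpow_one] at this
        have hgne : x - x ^ l ≠ 0 := by linarith
        rw [hderiv x hx.1 hgne]
        apply div_pos
        · exact mul_pos (Real.rpow_pos_of_pos hx.1 _) (M_pos hl0 hl2 hx.1 hx.2)
        · exact lt_of_le_of_ne (sq_nonneg _) (Ne.symm (pow_ne_zero 2 hgne))
    intro a ha b hb hab
    dsimp only
    rw [hEq a ha.1, hEq b hb.1]
    exact hmono ha hb hab
  · have hanti : StrictAntiOn h (Ioi 1) := by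
      apply strictAntiOn_of_deriv_neg (convex_Ioi 1)
      · have hne : ∀ x ∈ Ioi (1:ℝ), x ≠ 0 := fun x hx => by
          have : (1:ℝ) < x := hx; positivity
        apply ContinuousOn.div ((contOn_rpow _ hne).sub (contOn_rpow _ hne))
          (continuousOn_id.sub (contOn_rpow _ hne))
        intro x hx
        have hx1 : (1:ℝ) < x := hx
        have hlt : x ^ l < x := by
          have := Real.rpow_lt_rpow_of_exponent_lt hx1 (by linarith : l < 1)
          rwa [Real.rpow_one] at this
        show x - x ^ l ≠ 0; intro hc
        linarith
      · intro x hx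
        rw [interior_Ioi] at hx
        have hx0 : (0:ℝ) < x := lt_trans one_pos hx
        have hlt : x ^ l < x := by
          have := Real.rpow_lt_rpow_of_exponent_lt hx (by linarith : l < 1)
          rwa [Real.rpow_one] at this
        have hgne : x - x ^ l ≠ 0 := by linarith
        rw [hderiv x hx0 hgne]
        apply div_neg_of_neg_of_pos
        · exact mul_neg_of_pos_of_neg (Real.rpow_pos_of_pos hx0 _) (M_neg hl0 hl2 hx)
        · exact lt_of_le_of_ne (sq_nonneg _) (Ne.symm (pow_ne_zero 2 hgne))
    intro a ha b hb hab
    dsimp only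
    rw [hEq a (lt_trans one_pos ha), hEq b (lt_trans one_pos hb)]
    exact hanti ha hb hab
end

section
/- Fix λ ∈ (0, 1/2) and define ρ(r) := √r·(r^λ − 1)/(r − r^λ) for r ∈ (0,1) ∪ (1,∞). Then ρ(r) tends to λ/(1 − λ) as r → 1, and 0 < ρ(r) < λ/(1 − λ) for all r in the domain. -/
open Filter Topology

private lemma key_sinh (a b : ℝ) (ha : 0 < a) (hab : a < b) {x : ℝ} (hx : 0 < x) :
    b * Real.sinh (a * x) < a * Real.sinh (b * x) := by
  set f : ℝ → ℝ := fun y => a * Real.sinh (b * y) - b * Real.sinh (a * y) with hf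
  have hd : ∀ y : ℝ, HasDerivAt f (a * (Real.cosh (b * y) * b) - b * (Real.cosh (a * y) * a)) y := by
    intro y
    have := (((hasDerivAt_id y).const_mul b).sinh.const_mul a).sub
      (((hasDerivAt_id y).const_mul a).sinh.const_mul b)
    simpa [hf, Pi.sub_def] using this
  have hmono : StrictMonoOn f (Set.Ici (0:ℝ)) := by
    apply strictMonoOn_of_deriv_pos (convex_Ici 0)
    · exact (Continuous.sub (continuous_const.mul (Real.continuous_sinh.comp (continuous_const.mul continuous_id)))
        (continuous_const.mul (Real.continuous_sinh.comp (continuous_const.mul continuous_id)))).continuousOn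
    · intro y hy
      rw [interior_Ici, Set.mem_Ioi] at hy
      rw [(hd y).deriv]
      have hcosh : Real.cosh (a * y) < Real.cosh (b * y) := by
        rw [Real.cosh_lt_cosh, abs_of_pos (mul_pos ha hy), abs_of_pos (mul_pos (ha.trans hab) hy)]
        exact mul_lt_mul_of_pos_right hab hy
      have hb : 0 < b := ha.trans hab
      have heq : a * (Real.cosh (b * y) * b) - b * (Real.cosh (a * y) * a)
          = a * b * (Real.cosh (b * y) - Real.cosh (a * y)) := by ring
      rw [heq]
      exact mul_pos (mul_pos ha hb) (sub_pos.2 hcosh)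
  have h0 : f 0 < f x := hmono Set.self_mem_Ici (le_of_lt hx) hx
  simp only [hf, mul_zero, Real.sinh_zero] at h0
  linarith

private lemma ratio_bound (l : ℝ) (hl0 : 0 < l) (hl2 : l < 1/2) {t : ℝ} (ht : t ≠ 0) :
    0 < Real.sinh (l * t) / Real.sinh ((1 - l) * t) ∧
      Real.sinh (l * t) / Real.sinh ((1 - l) * t) < l / (1 - l) := by
  have hl1 : l < 1 - l := by linarith
  have h1l : 0 < 1 - l := by linarith
  have main : ∀ s : ℝ, 0 < s →
      0 < Real.sinh (l * s) / Real.sinh ((1 - l) * s) ∧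
      Real.sinh (l * s) / Real.sinh ((1 - l) * s) < l / (1 - l) := by
    intro s hs
    have hnum : 0 < Real.sinh (l * s) := Real.sinh_pos_iff.2 (mul_pos hl0 hs)
    have hden : 0 < Real.sinh ((1 - l) * s) := Real.sinh_pos_iff.2 (mul_pos h1l hs)
    refine ⟨div_pos hnum hden, ?_⟩
    rw [div_lt_div_iff₀ hden h1l]
    have := key_sinh l (1 - l) hl0 hl1 hs
    linarith
  rcases ht.lt_or_gt with h | h
  · have := main (-t) (by linarith)
    rw [mul_neg, mul_neg, Real.sinh_neg, Real.sinh_neg, neg_div_neg_eq] at this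
    exact this
  · exact main t h

private lemma expr_eq (s u : ℝ) (hu : u ≠ 0) :
    Real.exp (s + u) * (Real.exp (2 * s) - 1) / (Real.exp (2 * (s + u)) - Real.exp (2 * s)) =
      Real.sinh s / Real.sinh u := by
  have e2s : Real.exp (2 * s) = Real.exp s ^ 2 := by rw [two_mul, Real.exp_add, sq]
  have e2su : Real.exp (2 * (s + u)) = (Real.exp s * Real.exp u) ^ 2 := by
    rw [two_mul, Real.exp_add, Real.exp_add, sq]
  have esu : Real.exp (s + u) = Real.exp s * Real.exp u := Real.exp_add s u
  rw [Real.sinh_eq, Real.sinh_eq, e2s, e2su, esu, Real.exp_neg, Real.exp_neg]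
  have hes : Real.exp s ≠ 0 := (Real.exp_pos s).ne'
  have heu : Real.exp u ≠ 0 := (Real.exp_pos u).ne'
  have heu1 : Real.exp u ≠ 1 := fun h => hu ((Real.exp_eq_one_iff u).1 h)
  have hden1 : (Real.exp s * Real.exp u) ^ 2 - Real.exp s ^ 2 ≠ 0 := by
    have : (Real.exp s * Real.exp u) ^ 2 - Real.exp s ^ 2
        = Real.exp s ^ 2 * (Real.exp u ^ 2 - 1) := by ring
    rw [this]
    refine mul_ne_zero (pow_ne_zero 2 hes) (sub_ne_zero.2 ?_)
    intro h
    have : Real.exp u = 1 := by nlinarith [Real.exp_pos u]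
    exact heu1 this
  have hden2 : (Real.exp u - (Real.exp u)⁻¹) / 2 ≠ 0 := by
    rw [div_ne_zero_iff]
    refine ⟨sub_ne_zero.2 ?_, two_ne_zero⟩
    intro h
    have : Real.exp u ^ 2 = 1 := by field_simp at h; nlinarith
    have : Real.exp u = 1 := by nlinarith [Real.exp_pos u]
    exact heu1 this
  rw [div_eq_div_iff hden1 hden2]
  field_simp

theorem stmt_9 (l : ℝ) (hl : l ∈ Set.Ioo (0:ℝ) (1/2)) :
    Tendsto (fun r : ℝ => Real.sqrt r * (r ^ l - 1) / (r - r ^ l)) (𝓝[≠] 1)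
      (𝓝 (l / (1 - l))) ∧
    ∀ r ∈ Set.Ioo (0:ℝ) 1 ∪ Set.Ioi 1,
      0 < Real.sqrt r * (r ^ l - 1) / (r - r ^ l) ∧
      Real.sqrt r * (r ^ l - 1) / (r - r ^ l) < l / (1 - l) := by
  obtain ⟨hl0, hl2⟩ := hl
  have h1l : (0:ℝ) < 1 - l := by linarith
  constructor
  · -- the limit
    have hderiv : HasDerivAt (fun x : ℝ => x ^ l) l 1 := by
      have := Real.hasDerivAt_rpow_const (x := 1) (p := l) (Or.inl one_ne_zero)
      simpa using this
    have hslope : Tendsto (fun r : ℝ => (r ^ l - 1) / (r - 1)) (𝓝[≠] 1) (𝓝 l) := by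
      have h := hasDerivAt_iff_tendsto_slope.1 hderiv
      refine h.congr (fun r => ?_)
      rw [slope_def_field]
      norm_num
    have hden : Tendsto (fun r : ℝ => (r - r ^ l) / (r - 1)) (𝓝[≠] 1) (𝓝 (1 - l)) := by
      refine (tendsto_const_nhds.sub hslope).congr' ?_
      filter_upwards [self_mem_nhdsWithin] with r hr
      have hr1 : r - 1 ≠ 0 := sub_ne_zero.2 hr
      field_simp
      ring
    have hsqrt : Tendsto (fun r : ℝ => Real.sqrt r) (𝓝[≠] 1) (𝓝 1) := by
      have : Tendsto (fun r : ℝ => Real.sqrt r) (𝓝 1) (𝓝 (Real.sqrt 1)) :=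
        Real.continuous_sqrt.tendsto 1
      rw [Real.sqrt_one] at this
      exact this.mono_left nhdsWithin_le_nhds
    have hmain := ((hsqrt.mul hslope).div hden (by linarith : (1:ℝ) - l ≠ 0))
    rw [one_mul] at hmain
    refine hmain.congr' ?_
    filter_upwards [self_mem_nhdsWithin] with r hr
    have hr1 : r - 1 ≠ 0 := sub_ne_zero.2 hr
    rcases eq_or_ne (r - r ^ l) 0 with h | h
    · simp [h, div_eq_zero_iff.2 (Or.inl h)]
    · simp only [Pi.div_apply]
      field_simp
  · -- the bounds
    intro r hr
    have hr0 : 0 < r := by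
      rcases hr with h | h
      · exact h.1
      · exact lt_trans one_pos h
    have hr1 : r ≠ 1 := by
      rcases hr with h | h
      · exact ne_of_lt h.2
      · exact ne_of_gt h
    have hlog : Real.log r ≠ 0 := by
      intro h
      rcases Real.log_eq_zero.1 h with h' | h' | h' <;> [exact hr0.ne' h'; exact hr1 h'; linarith]
    set t : ℝ := Real.log r / 2 with htdef
    have ht : t ≠ 0 := by
      simp only [htdef, div_ne_zero_iff]
      exact ⟨hlog, two_ne_zero⟩
    set s : ℝ := l * t with hsdef
    set u : ℝ := (1 - l) * t with hudef
    have hu : u ≠ 0 := mul_ne_zero (by linarith) ht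
    have hrw : Real.sqrt r * (r ^ l - 1) / (r - r ^ l) =
        Real.exp (s + u) * (Real.exp (2 * s) - 1) / (Real.exp (2 * (s + u)) - Real.exp (2 * s)) := by
      have h1 : Real.sqrt r = Real.exp (s + u) := by
        rw [Real.sqrt_eq_rpow, Real.rpow_def_of_pos hr0]
        congr 1
        simp only [hsdef, hudef, htdef]
        ring
      have h2 : r ^ l = Real.exp (2 * s) := by
        rw [Real.rpow_def_of_pos hr0]
        congr 1
        simp only [hsdef, htdef]
        ring
      have h3 : r = Real.exp (2 * (s + u)) := by
        conv_lhs => rw [← Real.exp_log hr0]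
        congr 1
        simp only [hsdef, hudef, htdef]
        ring
      rw [h1, h2, h3]
    rw [hrw, expr_eq s u hu]
    exact ratio_bound l hl0 hl2 ht
end

section
/- Fix λ ∈ (0, 1/2) and let e₁, e₂, e₃, e₄ > 0 with e₁ + e₂ + e₃ + e₄ = 1. Set r₁ := e₁/e₄ and r₂ := e₂/e₃. If (e₁e₂)^λ/(e₁+e₂) = (e₃e₄)^λ/(e₃+e₄) and (e₁e₃)^λ/(e₁+e₃) = (e₂e₄)^λ/(e₂+e₄), then r₁ = 1 or r₂ = 1. -/
private lemma hkey (l u v : ℝ) (hl0 : 0 < l) (hl1 : l < 1/2) (hv : 0 < v)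
    (huv : v < u) : (u*u)^l * v < (v*v)^l * u := by
  have hu : 0 < u := hv.trans huv
  have pu : (u*u)^l = u^(2*l) := by
    rw [Real.mul_rpow hu.le hu.le, ← Real.rpow_add hu, two_mul]
  have pv : (v*v)^l = v^(2*l) := by
    rw [Real.mul_rpow hv.le hv.le, ← Real.rpow_add hv, two_mul]
  have hexp : 2*l + (1 - 2*l) = 1 := by ring
  have h1 : (u*u)^l * v = (u*v)^(2*l) * v^(1-2*l) := by
    rw [pu, Real.mul_rpow hu.le hv.le, mul_assoc, ← Real.rpow_add hv, hexp,
      Real.rpow_one]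
  have h2 : (v*v)^l * u = (u*v)^(2*l) * u^(1-2*l) := by
    rw [pv, Real.mul_rpow hu.le hv.le, mul_comm (u^(2*l)) (v^(2*l)), mul_assoc,
      ← Real.rpow_add hu, hexp, Real.rpow_one]
  rw [h1, h2]
  exact mul_lt_mul_of_pos_left (Real.rpow_lt_rpow hv.le huv (by linarith))
    (Real.rpow_pos_of_pos (mul_pos hu hv) _)

private lemma aux (l x y a b : ℝ) (hl0 : 0 < l) (hl1 : l < 1/2)
    (hx : 0 < x) (hy : 0 < y) (ha : 0 < a) (hb : 0 < b) (hne : x ≠ y)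
    (hE : (x*x)^l * ((a+y)*(b+y)) = (y*y)^l * ((x+a)*(x+b))) : x*y < a*b := by
  rcases hne.lt_or_gt with h | h
  · -- x < y
    have key := hkey l y x hl0 hl1 hx h
    have c3 : (x*x)^l * (((a+y)*(b+y))*x) < (x*x)^l * (y*((x+a)*(x+b))) := by
      calc (x*x)^l * (((a+y)*(b+y))*x) = (y*y)^l * x * ((x+a)*(x+b)) := by
            linear_combination x * hE
        _ < (x*x)^l * y * ((x+a)*(x+b)) := by
            apply mul_lt_mul_of_pos_right key (by positivity)
        _ = (x*x)^l * (y*((x+a)*(x+b))) := by ring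
    have c4 : ((a+y)*(b+y))*x < y*((x+a)*(x+b)) :=
      lt_of_mul_lt_mul_left c3 (by positivity)
    nlinarith [c4, sub_pos.mpr h]
  · -- y < x
    have key := hkey l x y hl0 hl1 hy h
    have c3 : (y*y)^l * (((x+a)*(x+b))*y) < (y*y)^l * (x*((a+y)*(b+y))) := by
      calc (y*y)^l * (((x+a)*(x+b))*y) = (x*x)^l * y * ((a+y)*(b+y)) := by
            linear_combination (-y) * hE
        _ < (y*y)^l * x * ((a+y)*(b+y)) := by
            apply mul_lt_mul_of_pos_right key (by positivity)
        _ = (y*y)^l * (x*((a+y)*(b+y))) := by ring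
    have c4 : ((x+a)*(x+b))*y < x*((a+y)*(b+y)) :=
      lt_of_mul_lt_mul_left c3 (by positivity)
    nlinarith [c4, sub_pos.mpr h]

theorem stmt_11 (l e1 e2 e3 e4 : ℝ) (hl : l ∈ Set.Ioo (0:ℝ) (1/2))
    (h1 : 0 < e1) (h2 : 0 < e2) (h3 : 0 < e3) (h4 : 0 < e4)
    (hsum : e1 + e2 + e3 + e4 = 1)
    (heq1 : (e1 * e2) ^ l / (e1 + e2) = (e3 * e4) ^ l / (e3 + e4))
    (heq2 : (e1 * e3) ^ l / (e1 + e3) = (e2 * e4) ^ l / (e2 + e4)) :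
    e1 / e4 = 1 ∨ e2 / e3 = 1 := by
  obtain ⟨hl0, hl1⟩ := hl
  by_cases h14 : e1 = e4
  · exact Or.inl (by rw [h14]; exact div_self h4.ne')
  by_cases h23 : e2 = e3
  · exact Or.inr (by rw [h23]; exact div_self h3.ne')
  exfalso
  have hA : (e1 * e2) ^ l * (e3 + e4) = (e3 * e4) ^ l * (e1 + e2) :=
    (div_eq_div_iff (by positivity) (by positivity)).mp heq1
  have hB : (e1 * e3) ^ l * (e2 + e4) = (e2 * e4) ^ l * (e1 + e3) :=
    (div_eq_div_iff (by positivity) (by positivity)).mp heq2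
  -- rpow product identities
  have k1 : (e1*e2)^l * ((e1*e3)^l) = (e2*e3)^l * ((e1*e1)^l) := by
    rw [← Real.mul_rpow (by positivity) (by positivity),
        ← Real.mul_rpow (by positivity) (by positivity)]
    congr 1; ring
  have k2 : (e3*e4)^l * ((e2*e4)^l) = (e2*e3)^l * ((e4*e4)^l) := by
    rw [← Real.mul_rpow (by positivity) (by positivity),
        ← Real.mul_rpow (by positivity) (by positivity)]
    congr 1; ring
  have k3 : (e1*e2)^l * ((e2*e4)^l) = (e1*e4)^l * ((e2*e2)^l) := by
    rw [← Real.mul_rpow (by positivity) (by positivity),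
        ← Real.mul_rpow (by positivity) (by positivity)]
    congr 1; ring
  have k4 : (e3*e4)^l * ((e1*e3)^l) = (e1*e4)^l * ((e3*e3)^l) := by
    rw [← Real.mul_rpow (by positivity) (by positivity),
        ← Real.mul_rpow (by positivity) (by positivity)]
    congr 1; ring
  have P1 : (e2*e3)^l * ((e1*e1)^l * ((e2+e4)*(e3+e4)))
      = (e2*e3)^l * ((e4*e4)^l * ((e1+e2)*(e1+e3))) := by
    linear_combination ((e2*e4)^l * (e1+e3)) * hA + ((e1*e2)^l * (e3+e4)) * hB
      - ((e2+e4)*(e3+e4)) * k1 + ((e1+e2)*(e1+e3)) * k2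
  have P2 : (e1*e4)^l * ((e2*e2)^l * ((e3+e4)*(e1+e3)))
      = (e1*e4)^l * ((e3*e3)^l * ((e1+e2)*(e2+e4))) := by
    linear_combination ((e1*e3)^l * (e2+e4)) * hA - ((e1*e2)^l * (e3+e4)) * hB
      - ((e3+e4)*(e1+e3)) * k3 + ((e1+e2)*(e2+e4)) * k4
  have E1 : (e1*e1)^l * ((e2+e4)*(e3+e4)) = (e4*e4)^l * ((e1+e2)*(e1+e3)) :=
    mul_left_cancel₀ (ne_of_gt (Real.rpow_pos_of_pos (by positivity) l)) P1
  have E2 : (e2*e2)^l * ((e3+e4)*(e1+e3)) = (e3*e3)^l * ((e1+e2)*(e2+e4)) :=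
    mul_left_cancel₀ (ne_of_gt (Real.rpow_pos_of_pos (by positivity) l)) P2
  have I1 : e1*e4 < e2*e3 := by
    apply aux l e1 e4 e2 e3 hl0 hl1 h1 h4 h2 h3 h14
    linear_combination E1
  have I2 : e2*e3 < e4*e1 := by
    apply aux l e2 e3 e4 e1 hl0 hl1 h2 h3 h4 h1 h23
    linear_combination E2
  linarith
end

section
/- For all r₁, r₂ > 0 and λ ∈ (0,1/2), if (r₁^{2λ} − r₁)·r₂^λ·(1 − r₂) + r₁^λ·(1 − r₁)·(r₂^{2λ} − r₂) = 0, then r₁ = 1 or r₂ = 1. -/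
lemma key_sign (r μ : ℝ) (hr : 0 < r) (hμ0 : 0 < μ) (hμ1 : μ < 1) (hne : r ≠ 1) :
    0 < (r ^ μ - r) * (1 - r) := by
  rcases lt_or_gt_of_ne hne with h | h
  · have : r < r ^ μ := by
      calc r = r ^ (1:ℝ) := (Real.rpow_one r).symm
      _ < r ^ μ := Real.rpow_lt_rpow_of_exponent_gt hr h hμ1
    nlinarith
  · have : r ^ μ < r := by
      calc r ^ μ < r ^ (1:ℝ) := Real.rpow_lt_rpow_of_exponent_lt h hμ1
      _ = r := Real.rpow_one r
    nlinarith

theorem stmt_12 (r1 r2 l : ℝ) (hr1 : 0 < r1) (hr2 : 0 < r2) (hl : l ∈ Set.Ioo (0:ℝ) (1/2))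
    (h : (r1 ^ (2 * l) - r1) * r2 ^ l * (1 - r2) + r1 ^ l * (1 - r1) * (r2 ^ (2 * l) - r2) = 0) :
    r1 = 1 ∨ r2 = 1 := by
  obtain ⟨hl0, hl1⟩ := hl
  by_contra hc
  push_neg at hc
  obtain ⟨h1, h2⟩ := hc
  have k1 := key_sign r1 (2 * l) hr1 (by linarith) (by linarith) h1
  have k2 := key_sign r2 (2 * l) hr2 (by linarith) (by linarith) h2
  have p1 : 0 < r1 ^ l := Real.rpow_pos_of_pos hr1 l
  have p2 : 0 < r2 ^ l := Real.rpow_pos_of_pos hr2 l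
  have hx : 0 < ((r1 ^ (2 * l) - r1) * r2 ^ l * (1 - r2)) *
      (r1 ^ l * (1 - r1) * (r2 ^ (2 * l) - r2)) := by
    nlinarith [mul_pos (mul_pos k1 k2) (mul_pos p1 p2)]
  nlinarith [hx, h, sq_nonneg ((r1 ^ (2 * l) - r1) * r2 ^ l * (1 - r2) -
    r1 ^ l * (1 - r1) * (r2 ^ (2 * l) - r2))]
end

section
/- For every x ∈ (0, 1/3) and real s, t with 0 ≤ t ≤ 1, t ≤ s ≤ (1 + t²)/2 and (s, t) ≠ (0, 0), one has 4s·x²·(2 + 6x² − s(1 + 3x)²) + (1 + 3x²)·t² > 0. -/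
theorem stmt_14 (x s t : ℝ) (hx : x ∈ Set.Ioo (0:ℝ) (1/3)) (ht0 : 0 ≤ t) (ht1 : t ≤ 1)
    (hts : t ≤ s) (hs : s ≤ (1 + t ^ 2) / 2) (hne : ¬(s = 0 ∧ t = 0)) :
    4 * s * x ^ 2 * (2 + 6 * x ^ 2 - s * (1 + 3 * x) ^ 2) + (1 + 3 * x ^ 2) * t ^ 2 > 0 := by
  obtain ⟨hx0, hx1⟩ := hx
  have hspos : 0 < s := by
    rcases (ht0.trans hts).lt_or_eq with h | h
    · exact h
    · exact absurd ⟨h.symm, le_antisymm (by linarith) ht0⟩ hne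
  have ht2 : (0:ℝ) ≤ t ^ 2 - (2 * s - 1) := by nlinarith
  have hs1 : s ≤ 1 := by nlinarith
  rcases lt_or_ge (s * (1 + 3*x)^2) (2 + 6*x^2) with h | h
  · nlinarith [mul_pos (mul_pos hspos (mul_pos hx0 hx0)) (sub_pos.mpr h), sq_nonneg t]
  · have hs2 : 1/2 ≤ s := by nlinarith [sq_nonneg (1 - x), sq_nonneg (1 + 3*x)]
    have hpos : (0:ℝ) ≤ 2 + 2*x^2 - 24*x^3 - 36*x^4 := by
      nlinarith [mul_nonneg (mul_nonneg hx0.le hx0.le) (by linarith : (0:ℝ) ≤ 1/3 - x),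
        mul_nonneg (mul_nonneg (mul_nonneg hx0.le hx0.le) hx0.le) (by linarith : (0:ℝ) ≤ 1/3 - x)]
    have hP1 : (0:ℝ) ≤ (1 - s) * (s*(1+3*x)^2 - (2+6*x^2)) :=
      mul_nonneg (by linarith) (by linarith)
    have hP2 : (0:ℝ) ≤ (s - 1/2) * (2 + 2*x^2 - 24*x^3 - 36*x^4) :=
      mul_nonneg (by linarith) hpos
    nlinarith [mul_nonneg (by positivity : (0:ℝ) ≤ 1 + 3*x^2) ht2,
      mul_nonneg (by positivity : (0:ℝ) ≤ 4*x^2) hP1, hP2,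
      mul_pos (mul_pos hx0 hx0) (by nlinarith : (0:ℝ) < (1-x)^2)]
end

section
/- Let λ ∈ (0,1/2), r := 2 + √3, and x₁ := 1/(1 + 2r(r^{2λ} − 1)/(r² − r^{2λ})). If moreover λ := δ·log₂((1+2δ)/(1−2δ)) where δ := 1/(2 log₂(2+√3)), then x₁ = 1 − 4δ/√3. -/
theorem stmt_19 (δ l r x1 : ℝ)
    (hδ : δ = 1 / (2 * Real.logb 2 (2 + Real.sqrt 3)))
    (hl : l = δ * Real.logb 2 ((1 + 2 * δ) / (1 - 2 * δ)))
    (hr : r = 2 + Real.sqrt 3)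
    (hl' : l ∈ Set.Ioo (0:ℝ) (1/2))
    (hx1 : x1 = 1 / (1 + 2 * r * (r ^ (2 * l) - 1) / (r ^ 2 - r ^ (2 * l)))) :
    x1 = 1 - 4 * δ / Real.sqrt 3 := by
  have s3 : Real.sqrt 3 ^ 2 = 3 := Real.sq_sqrt (by norm_num)
  have s3pos : (0:ℝ) < Real.sqrt 3 := Real.sqrt_pos.mpr (by norm_num)
  have s3gt : (1.7:ℝ) < Real.sqrt 3 := by nlinarith [s3, s3pos]
  have s3lt : Real.sqrt 3 < 2 := by nlinarith [s3, s3pos]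
  have hr2 : (3.7:ℝ) < r := by rw [hr]; linarith
  have hrpos : (0:ℝ) < r := by linarith
  have hrne1 : r ≠ 1 := by linarith
  have hrq : r ^ 2 = 4 * r - 1 := by rw [hr]; nlinarith [s3]
  have hsr : Real.sqrt 3 = r - 2 := by rw [hr]; ring
  set L := Real.logb 2 r with hLdef
  have hδ' : δ = 1 / (2 * L) := by rw [hδ, hLdef, hr]
  -- L > 5/3 since r^3 > 2^5
  have hL53 : 5 / 3 < L := by
    have h1 : Real.logb 2 ((2:ℝ) ^ (5:ℕ)) < Real.logb 2 (r ^ (3:ℕ)) := by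
      apply Real.logb_lt_logb (by norm_num) (by norm_num)
      nlinarith
    rw [Real.logb_pow, Real.logb_pow,
      Real.logb_self_eq_one (by norm_num : (1:ℝ) < 2)] at h1
    push_cast at h1
    linarith
  have hLpos : (0:ℝ) < L := by linarith
  have hδpos : 0 < δ := by rw [hδ']; positivity
  have hδlt : δ < 3 / 10 := by
    rw [hδ', div_lt_iff₀ (by positivity)]
    linarith
  have h2δ : (0:ℝ) < 1 - 2 * δ := by linarith
  set A : ℝ := (1 + 2 * δ) / (1 - 2 * δ) with hAdef
  have hApos : 0 < A := by apply div_pos <;> linarith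
  have hA1 : 1 < A := by
    rw [hAdef, lt_div_iff₀ (by linarith)]; linarith
  have hA4 : A < 4 := by
    rw [hAdef, div_lt_iff₀ (by linarith)]; linarith
  have hlogr : Real.log r ≠ 0 := ne_of_gt (Real.log_pos (by linarith))
  have hlog2 : Real.log 2 ≠ 0 := ne_of_gt (Real.log_pos (by norm_num))
  have h2l : 2 * l = Real.logb r A := by
    rw [hl, hδ']
    simp only [Real.logb, hLdef]
    field_simp
  have hrA : r ^ (2 * l) = A := by
    rw [h2l]; exact Real.rpow_logb hrpos hrne1 hApos
  -- algebra
  have hr2A : A < r ^ 2 := by nlinarith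
  have hD : (0:ℝ) < r ^ 2 - A := by linarith
  have e1 : 1 + 2 * r * (A - 1) / (r ^ 2 - A)
      = (r ^ 2 - 2 * r + (2 * r - 1) * A) / (r ^ 2 - A) := by
    field_simp
    ring
  have hDen : (0:ℝ) < r ^ 2 - 2 * r + (2 * r - 1) * A := by nlinarith
  rw [hx1, hrA, e1, one_div_div, hsr]
  have hrm2 : r - 2 ≠ 0 := by linarith
  rw [div_eq_iff (ne_of_gt hDen), hAdef]
  field_simp
  linear_combination (-4)*δ*(1+2*δ) * hrq
end
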